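/- Let 0 < r < s and let f : ℝ² → ℝ be continuously differentiable on an open set containing the closed annulus {x : r ≤ ‖x‖ ≤ s}. Define the circular average f* : [r, s] → ℝ by f*(ρ) = (1/(2π))·∫₀^{2π} f(ρ·cos θ, ρ·sin θ) dθ. Then f* is differentiable on (r, s) and 2π·∫_r^s |(f*)'(ρ)|²·ρ dρ ≤ ∫_{{r < ‖x‖ < s}} ‖∇f(x)‖² dx. In other words, replacing f by its circular averages does not increase the Dirichlet energy on the annulus. -/

import Mathlib

open Real MeasureTheory

noncomputable def Pt (ρ θ : ℝ) : EuclideanSpace ℝ (Fin 2) :=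
  (WithLp.equiv 2 (Fin 2 → ℝ)).symm ![ρ * Real.cos θ, ρ * Real.sin θ]

lemma Pt_smul (ρ θ : ℝ) : Pt ρ θ = ρ • Pt 1 θ := by
  simp only [Pt]
  ext i
  fin_cases i <;> simp [PiLp.toLp_apply]

lemma norm_Pt_one (θ : ℝ) : ‖Pt 1 θ‖ = 1 := by
  simp [Pt, EuclideanSpace.norm_eq, PiLp.toLp_apply, Fin.sum_univ_two]

lemma norm_Pt (ρ θ : ℝ) : ‖Pt ρ θ‖ = |ρ| := by
  rw [Pt_smul, norm_smul, norm_Pt_one]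
  simp [Real.norm_eq_abs]

lemma continuous_Pt : Continuous (fun p : ℝ × ℝ => Pt p.1 p.2) := by
  have : Continuous (fun p : ℝ × ℝ => (![p.1 * Real.cos p.2, p.1 * Real.sin p.2] : Fin 2 → ℝ)) := by
    refine continuous_pi fun i => ?_
    fin_cases i <;> simp <;> fun_prop
  exact (PiLp.continuous_toLp 2 (fun _ : Fin 2 => ℝ)).comp this

lemma hasDerivAt_Pt (θ ρ : ℝ) : HasDerivAt (fun ρ => Pt ρ θ) (Pt 1 θ) ρ := by
  have h := (hasDerivAt_id ρ).smul_const (Pt 1 θ)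
  simp only [one_smul] at h
  refine HasDerivAt.congr_deriv (h.congr_of_eventuallyEq ?_) rfl
  filter_upwards with x using (Pt_smul x θ)

lemma Pt_periodic (ρ : ℝ) : Function.Periodic (fun θ => Pt ρ θ) (2 * π) := by
  intro θ; simp only [Pt]
  congr 2 <;> simp [Real.cos_add_two_pi, Real.sin_add_two_pi]

lemma cs_interval (h : ℝ → ℝ) (hc : Continuous h) :
    (∫ θ in (0:ℝ)..(2*π), h θ)^2 ≤ (2*π) * ∫ θ in (0:ℝ)..(2*π), (h θ)^2 := by
  have hπ : (0:ℝ) < 2*π := by positivity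
  set I := ∫ θ in (0:ℝ)..(2*π), h θ with hI
  set c : ℝ := I / (2*π) with hc'
  have h1 : (0:ℝ) ≤ ∫ θ in (0:ℝ)..(2*π), (h θ - c)^2 :=
    intervalIntegral.integral_nonneg hπ.le (fun θ _ => sq_nonneg _)
  have h2 : ∫ θ in (0:ℝ)..(2*π), (h θ - c)^2
      = (∫ θ in (0:ℝ)..(2*π), (h θ)^2) - (2*c)*I + c^2*(2*π) := by
    have e : (fun θ => (h θ - c)^2) = fun θ => ((h θ)^2 - (2*c)*(h θ)) + c^2 := by
      funext θ; ring
    rw [e, intervalIntegral.integral_add (f := fun θ => (h θ)^2 - (2*c)*(h θ)) (g := fun _ => c^2) (((hc.pow 2).sub (continuous_const.mul hc)).intervalIntegrable _ _)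
      (continuous_const.intervalIntegrable _ _),
      intervalIntegral.integral_sub (f := fun θ => (h θ)^2) (g := fun θ => (2*c)*(h θ)) ((hc.pow 2).intervalIntegrable _ _)
      ((continuous_const.mul hc).intervalIntegrable _ _),
      intervalIntegral.integral_const_mul, intervalIntegral.integral_const]
    simp [← hI]
    ring
  have hπ0 : (2*π) ≠ 0 := ne_of_gt hπ
  have hc2 : c * (2*π) = I := by rw [hc']; exact div_mul_cancel₀ I hπ0
  nlinarith [h1, h2, sq_nonneg c]
theorem stmt_7 (r s : ℝ) (hr : 0 < r) (hrs : r < s)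
    (f : EuclideanSpace ℝ (Fin 2) → ℝ)
    (U : Set (EuclideanSpace ℝ (Fin 2))) (hU : IsOpen U)
    (hsub : {x : EuclideanSpace ℝ (Fin 2) | r ≤ ‖x‖ ∧ ‖x‖ ≤ s} ⊆ U)
    (hf : ContDiffOn ℝ 1 f U)
    (fstar : ℝ → ℝ)
    (hfstar : ∀ ρ ∈ Set.Icc r s,
      fstar ρ = (1 / (2 * π)) * ∫ θ in (0 : ℝ)..(2 * π),
        f ((WithLp.equiv 2 (Fin 2 → ℝ)).symm ![ρ * Real.cos θ, ρ * Real.sin θ])) :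
    (∀ ρ ∈ Set.Ioo r s, DifferentiableAt ℝ fstar ρ) ∧
    2 * π * (∫ ρ in r..s, |deriv fstar ρ| ^ 2 * ρ)
      ≤ ∫ x in {x : EuclideanSpace ℝ (Fin 2) | r < ‖x‖ ∧ ‖x‖ < s},
          ‖gradient f x‖ ^ 2 := by
  have hπ : (0:ℝ) < 2*π := by positivity
  -- compactness of the closed annulus
  have hKcl : IsCompact {x : EuclideanSpace ℝ (Fin 2) | r ≤ ‖x‖ ∧ ‖x‖ ≤ s} := by
    have hcl : IsClosed {x : EuclideanSpace ℝ (Fin 2) | r ≤ ‖x‖ ∧ ‖x‖ ≤ s} :=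
      (isClosed_le continuous_const continuous_norm).inter
        (isClosed_le continuous_norm continuous_const)
    apply Metric.isCompact_of_isClosed_isBounded hcl
    apply (Metric.isBounded_closedBall (x := (0:EuclideanSpace ℝ (Fin 2))) (r := s)).subset
    intro x hx
    simpa [Metric.mem_closedBall] using hx.2
  obtain ⟨δ₀, hδ₀pos, hδ₀⟩ := hKcl.exists_thickening_subset_open hU hsub
  set δ : ℝ := min (δ₀/2) (r/2) with hδdef
  have hδpos : 0 < δ := lt_min (by linarith) (by linarith)
  have hδlt : δ < δ₀ := lt_of_le_of_lt (min_le_left _ _) (by linarith)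
  have hδr : δ ≤ r/2 := min_le_right _ _
  set r₁ : ℝ := r - δ with hr₁def
  set s₁ : ℝ := s + δ with hs₁def
  have hr₁pos : 0 < r₁ := by simp only [hr₁def]; linarith
  have hr₁r : r₁ < r := by simp only [hr₁def]; linarith
  have hss₁ : s < s₁ := by simp only [hs₁def]; linarith
  -- membership in U for the slightly larger annulus
  have hmemU : ∀ ρ ∈ Set.Icc r₁ s₁, ∀ θ : ℝ, Pt ρ θ ∈ U := by
    intro ρ hρ θ
    apply hδ₀
    have key : ∀ ρ' : ℝ, r ≤ ρ' → ρ' ≤ s → |ρ - ρ'| < δ₀ →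
        Pt ρ θ ∈ Metric.thickening δ₀ {x : EuclideanSpace ℝ (Fin 2) | r ≤ ‖x‖ ∧ ‖x‖ ≤ s} := by
      intro ρ' h1 h2 h3
      rw [Metric.mem_thickening_iff]
      refine ⟨Pt ρ' θ, ⟨?_, ?_⟩, ?_⟩
      · rw [norm_Pt, abs_of_nonneg (le_trans hr.le h1)]; exact h1
      · rw [norm_Pt, abs_of_nonneg (le_trans hr.le h1)]; exact h2
      · rw [dist_eq_norm]
        have hsm : Pt ρ θ - Pt ρ' θ = (ρ - ρ') • Pt 1 θ := by
          rw [Pt_smul ρ, Pt_smul ρ', ← sub_smul]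
        rw [hsm, norm_smul, norm_Pt_one, mul_one, Real.norm_eq_abs]; exact h3
    have h1 : r₁ ≤ ρ := hρ.1
    have h2 : ρ ≤ s₁ := hρ.2
    rcases le_total ρ r with h | h
    · exact key r le_rfl hrs.le (by rw [abs_sub_lt_iff]; constructor <;>
        simp only [hr₁def] at h1 <;> linarith)
    rcases le_total ρ s with h' | h'
    · exact key ρ h h' (by simpa using hδ₀pos)
    · exact key s hrs.le le_rfl (by rw [abs_sub_lt_iff]; constructor <;>
        simp only [hs₁def] at h2 <;> linarith)
  have hfd : ∀ x ∈ U, DifferentiableAt ℝ f x := fun x hx =>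
    (hf.differentiableOn one_ne_zero).differentiableAt (hU.mem_nhds hx)
  have hfc : ContinuousOn (fderiv ℝ f) U := hf.continuousOn_fderiv_of_isOpen hU le_rfl
  -- bound on the derivative norm
  obtain ⟨C, hC0, hC⟩ : ∃ C : ℝ, 0 ≤ C ∧ ∀ ρ ∈ Set.Icc r₁ s₁, ∀ θ ∈ Set.Icc (-(2*π)) (2*π),
      ‖fderiv ℝ f (Pt ρ θ)‖ ≤ C := by
    obtain ⟨C₀, hC₀⟩ := (((isCompact_Icc.prod isCompact_Icc).image
      continuous_Pt)).exists_bound_of_continuousOn (hfc.mono (by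
        rintro x ⟨p, hp, rfl⟩; exact hmemU p.1 hp.1 p.2))
    refine ⟨max C₀ 0, le_max_right _ _, fun ρ hρ θ hθ => ?_⟩
    exact le_trans (hC₀ _ ⟨(ρ,θ), ⟨hρ,hθ⟩, rfl⟩) (le_max_left _ _)
  set F' : ℝ → ℝ → ℝ := fun ρ θ => (fderiv ℝ f (Pt ρ θ)) (Pt 1 θ) with hF'def
  have hgradnorm : ∀ x, ‖gradient f x‖ = ‖fderiv ℝ f x‖ := fun x =>
    (InnerProductSpace.toDual ℝ (EuclideanSpace ℝ (Fin 2))).symm.norm_map (fderiv ℝ f x)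
  have hF'le : ∀ ρ θ : ℝ, |F' ρ θ| ≤ ‖fderiv ℝ f (Pt ρ θ)‖ := by
    intro ρ θ
    calc |F' ρ θ| = ‖(fderiv ℝ f (Pt ρ θ)) (Pt 1 θ)‖ := rfl
      _ ≤ ‖fderiv ℝ f (Pt ρ θ)‖ * ‖Pt 1 θ‖ := (fderiv ℝ f (Pt ρ θ)).le_opNorm _
      _ = ‖fderiv ℝ f (Pt ρ θ)‖ := by rw [norm_Pt_one, mul_one]
  have cont_Ptθ : ∀ ρ : ℝ, Continuous fun θ => Pt ρ θ :=
    fun ρ => continuous_Pt.comp (continuous_const.prodMk continuous_id)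
  have hcontθ : ∀ ρ ∈ Set.Icc r₁ s₁, Continuous fun θ => F' ρ θ := by
    intro ρ hρ
    exact ((hfc.comp_continuous (cont_Ptθ ρ) (hmemU ρ hρ)).clm_apply
      (continuous_Pt.comp (continuous_const.prodMk continuous_id)))
  have hcontfθ : ∀ ρ ∈ Set.Icc r₁ s₁, Continuous fun θ => f (Pt ρ θ) := by
    intro ρ hρ
    exact hf.continuousOn.comp_continuous (cont_Ptθ ρ) (hmemU ρ hρ)
  -- key: derivative of fstar
  have hkey : ∀ ρ₀ ∈ Set.Ioo r s, HasDerivAt fstar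
      ((1/(2*π)) * ∫ θ in (0:ℝ)..(2*π), F' ρ₀ θ) ρ₀ := by
    intro ρ₀ hρ₀
    have hρ₀Icc : ρ₀ ∈ Set.Icc r₁ s₁ :=
      ⟨(lt_trans hr₁r hρ₀.1).le, (lt_trans hρ₀.2 hss₁).le⟩
    set ε : ℝ := min (ρ₀ - r₁) (s₁ - ρ₀) with hεdef
    have hεpos : 0 < ε := lt_min (by linarith [hρ₀.1, hr₁r]) (by linarith [hρ₀.2, hss₁])
    have hball : ∀ ρ ∈ Metric.ball ρ₀ ε, ρ ∈ Set.Icc r₁ s₁ := by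
      intro ρ hρb
      rw [Metric.mem_ball, Real.dist_eq, abs_sub_lt_iff] at hρb
      have h1 : ε ≤ ρ₀ - r₁ := min_le_left _ _
      have h2 : ε ≤ s₁ - ρ₀ := min_le_right _ _
      exact ⟨by linarith [hρb.2], by linarith [hρb.1]⟩
    obtain ⟨-, hD⟩ := intervalIntegral.hasDerivAt_integral_of_dominated_loc_of_deriv_le
      (F := fun ρ θ => f (Pt ρ θ)) (F' := F') (bound := fun _ => C)
      (a := 0) (b := 2*π) (x₀ := ρ₀) (Metric.ball_mem_nhds ρ₀ hεpos)
      (by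
        filter_upwards [Metric.ball_mem_nhds ρ₀ hεpos] with ρ hρ
        exact (hcontfθ ρ (hball ρ hρ)).aestronglyMeasurable)
      ((hcontfθ ρ₀ hρ₀Icc).intervalIntegrable _ _)
      (hcontθ ρ₀ hρ₀Icc).aestronglyMeasurable
      (by
        apply Filter.Eventually.of_forall
        intro θ hθ ρ hρ
        have hθ' : θ ∈ Set.Icc (-(2*π)) (2*π) := by
          rw [Set.uIoc_of_le hπ.le] at hθ
          exact ⟨by linarith [hθ.1], hθ.2⟩
        rw [Real.norm_eq_abs]
        exact le_trans (hF'le ρ θ) (hC ρ (hball ρ hρ) θ hθ'))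
      (intervalIntegrable_const (μ := volume))
      (by
        apply Filter.Eventually.of_forall
        intro θ _ ρ hρ
        exact ((hfd _ (hmemU ρ (hball ρ hρ) θ)).hasFDerivAt).comp_hasDerivAt ρ
          (hasDerivAt_Pt θ ρ))
    have hD' := hD.const_mul (1/(2*π))
    apply hD'.congr_of_eventuallyEq
    filter_upwards [isOpen_Ioo.mem_nhds hρ₀] with ρ hρ
    rw [hfstar ρ ⟨hρ.1.le, hρ.2.le⟩]
    rfl
  refine ⟨fun ρ hρ => (hkey ρ hρ).differentiableAt, ?_⟩
  set G : ℝ → ℝ := fun ρ => (1/(2*π)) * ∫ θ in (0:ℝ)..(2*π), F' ρ θ with hGdef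
  set Hf : ℝ → ℝ := fun ρ => ∫ θ in (0:ℝ)..(2*π), ‖fderiv ℝ f (Pt ρ θ)‖^2 with hHdef
  have hooIcc : ∀ ρ ∈ Set.Ioo r₁ s₁, ρ ∈ Set.Icc r₁ s₁ := fun ρ hρ => ⟨hρ.1.le, hρ.2.le⟩
  have hGcAt : ∀ ρ₀ ∈ Set.Ioo r₁ s₁,
      ContinuousAt (fun ρ => ∫ θ in (0:ℝ)..(2*π), F' ρ θ) ρ₀ := by
    intro ρ₀ hρ₀
    apply intervalIntegral.continuousAt_of_dominated_interval (bound := fun _ => C)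
    · filter_upwards [isOpen_Ioo.mem_nhds hρ₀] with ρ hρ
      exact (hcontθ ρ (hooIcc ρ hρ)).aestronglyMeasurable
    · filter_upwards [isOpen_Ioo.mem_nhds hρ₀] with ρ hρ
      apply Filter.Eventually.of_forall
      intro θ hθ
      have hθ' : θ ∈ Set.Icc (-(2*π)) (2*π) := by
        rw [Set.uIoc_of_le hπ.le] at hθ
        exact ⟨by linarith [hθ.1], hθ.2⟩
      rw [Real.norm_eq_abs]
      exact le_trans (hF'le ρ θ) (hC ρ (hooIcc ρ hρ) θ hθ')
    · exact intervalIntegrable_const (μ := volume)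
    · apply Filter.Eventually.of_forall
      intro θ _
      have h1 : ContinuousAt (fun ρ : ℝ => Pt ρ θ) ρ₀ :=
        (continuous_Pt.comp (continuous_id.prodMk continuous_const)).continuousAt
      have h2 : ContinuousAt (fderiv ℝ f) (Pt ρ₀ θ) :=
        hfc.continuousAt (hU.mem_nhds (hmemU ρ₀ (hooIcc ρ₀ hρ₀) θ))
      have h3 : ContinuousAt (fun ρ : ℝ => fderiv ℝ f (Pt ρ θ)) ρ₀ :=
        ContinuousAt.comp (g := fderiv ℝ f) (f := fun ρ : ℝ => Pt ρ θ) h2 h1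
      exact (((ContinuousLinearMap.apply ℝ ℝ (Pt 1 θ)).continuous).continuousAt).comp h3
  have hHcAt : ∀ ρ₀ ∈ Set.Ioo r₁ s₁, ContinuousAt Hf ρ₀ := by
    intro ρ₀ hρ₀
    apply intervalIntegral.continuousAt_of_dominated_interval (bound := fun _ => C^2)
    · filter_upwards [isOpen_Ioo.mem_nhds hρ₀] with ρ hρ
      exact (((hfc.comp_continuous (cont_Ptθ ρ) (hmemU ρ (hooIcc ρ hρ))).norm.pow
        2)).aestronglyMeasurable
    · filter_upwards [isOpen_Ioo.mem_nhds hρ₀] with ρ hρ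
      apply Filter.Eventually.of_forall
      intro θ hθ
      have hθ' : θ ∈ Set.Icc (-(2*π)) (2*π) := by
        rw [Set.uIoc_of_le hπ.le] at hθ
        exact ⟨by linarith [hθ.1], hθ.2⟩
      rw [Real.norm_eq_abs, abs_of_nonneg (by positivity)]
      exact pow_le_pow_left₀ (norm_nonneg _) (hC ρ (hooIcc ρ hρ) θ hθ') 2
    · exact intervalIntegrable_const (μ := volume)
    · apply Filter.Eventually.of_forall
      intro θ _
      have h1 : ContinuousAt (fun ρ : ℝ => Pt ρ θ) ρ₀ :=
        (continuous_Pt.comp (continuous_id.prodMk continuous_const)).continuousAt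
      have h2 : ContinuousAt (fderiv ℝ f) (Pt ρ₀ θ) :=
        hfc.continuousAt (hU.mem_nhds (hmemU ρ₀ (hooIcc ρ₀ hρ₀) θ))
      have h3 : ContinuousAt (fun ρ : ℝ => fderiv ℝ f (Pt ρ θ)) ρ₀ :=
        ContinuousAt.comp (g := fderiv ℝ f) (f := fun ρ : ℝ => Pt ρ θ) h2 h1
      exact (h3.norm.pow 2)
  have hIccIoo : ∀ ρ ∈ Set.Icc r s, ρ ∈ Set.Ioo r₁ s₁ := fun ρ hρ =>
    ⟨lt_of_lt_of_le hr₁r hρ.1, lt_of_le_of_lt hρ.2 hss₁⟩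
  have hGc : ContinuousOn G (Set.Icc r s) := fun ρ hρ =>
    (continuousAt_const.mul (hGcAt ρ (hIccIoo ρ hρ))).continuousWithinAt
  have hHc : ContinuousOn Hf (Set.Icc r s) := fun ρ hρ =>
    (hHcAt ρ (hIccIoo ρ hρ)).continuousWithinAt
  -- pointwise inequality
  have hpt : ∀ ρ ∈ Set.Icc r s, (G ρ)^2 * ρ ≤ (1/(2*π)) * (ρ * Hf ρ) := by
    intro ρ hρ
    have hρ' : ρ ∈ Set.Icc r₁ s₁ := ⟨le_trans hr₁r.le hρ.1, le_trans hρ.2 hss₁.le⟩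
    have hρpos : 0 < ρ := lt_of_lt_of_le hr hρ.1
    have hcF : Continuous fun θ => F' ρ θ := hcontθ ρ hρ'
    have cs := cs_interval _ hcF
    have hmono : (∫ θ in (0:ℝ)..(2*π), (F' ρ θ)^2) ≤ Hf ρ := by
      apply intervalIntegral.integral_mono_on hπ.le ((hcF.pow 2).intervalIntegrable _ _)
        (((hfc.comp_continuous (cont_Ptθ ρ) (hmemU ρ hρ')).norm.pow 2).intervalIntegrable _ _)
      intro θ _
      show (F' ρ θ)^2 ≤ ‖fderiv ℝ f (Pt ρ θ)‖^2
      rw [← sq_abs (F' ρ θ)]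
      exact pow_le_pow_left₀ (abs_nonneg _) (hF'le ρ θ) 2
    have h1 : (G ρ)^2 ≤ (1/(2*π)) * Hf ρ := by
      calc (G ρ)^2 = (1/(2*π))^2 * (∫ θ in (0:ℝ)..(2*π), F' ρ θ)^2 := by
            simp only [hGdef]; rw [mul_pow]
        _ ≤ (1/(2*π))^2 * ((2*π) * ∫ θ in (0:ℝ)..(2*π), (F' ρ θ)^2) :=
            mul_le_mul_of_nonneg_left cs (by positivity)
        _ ≤ (1/(2*π))^2 * ((2*π) * Hf ρ) :=
            mul_le_mul_of_nonneg_left (mul_le_mul_of_nonneg_left hmono hπ.le) (by positivity)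
        _ = (1/(2*π)) * Hf ρ := by
            field_simp
    calc (G ρ)^2 * ρ ≤ ((1/(2*π)) * Hf ρ) * ρ := mul_le_mul_of_nonneg_right h1 hρpos.le
      _ = (1/(2*π)) * (ρ * Hf ρ) := by ring
  -- polar coordinates
  have hpolar : ∫ ρ in r..s, ρ * Hf ρ
      = ∫ x in {x : EuclideanSpace ℝ (Fin 2) | r < ‖x‖ ∧ ‖x‖ < s}, ‖fderiv ℝ f x‖^2 := by
    set Ψ : EuclideanSpace ℝ (Fin 2) → ℝ := fun x => ‖fderiv ℝ f x‖^2 with hΨdef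
    set A : Set (EuclideanSpace ℝ (Fin 2)) := {x | r < ‖x‖ ∧ ‖x‖ < s} with hAdef
    set eT : (ℝ × ℝ) ≃ᵐ EuclideanSpace ℝ (Fin 2) :=
      ((MeasurableEquiv.toLp 2 (Fin 2 → ℝ)).symm.trans (MeasurableEquiv.finTwoArrow)).symm
      with heTdef
    have mpT : MeasurePreserving eT volume volume :=
      MeasurePreserving.symm _ ((volume_preserving_finTwoArrow ℝ).comp
        (EuclideanSpace.volume_preserving_symm_measurableEquiv_toLp (Fin 2)))
    have hTP : ∀ ρ θ : ℝ, eT (ρ * Real.cos θ, ρ * Real.sin θ) = Pt ρ θ := by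
      intro ρ θ
      ext i; fin_cases i <;> rfl
    have hAopen : IsOpen A := (isOpen_lt continuous_const continuous_norm).inter
      (isOpen_lt continuous_norm continuous_const)
    have hpre : MeasurableSet (eT ⁻¹' A) := eT.measurable hAopen.measurableSet
    have step1 : ∫ x in A, Ψ x = ∫ p in eT ⁻¹' A, Ψ (eT p) :=
      (mpT.setIntegral_preimage_emb eT.measurableEmbedding Ψ A).symm
    set F₀ : ℝ × ℝ → ℝ := (eT ⁻¹' A).indicator (fun p => Ψ (eT p)) with hF₀def
    have step2 : ∫ p, F₀ p = ∫ p in eT ⁻¹' A, Ψ (eT p) := integral_indicator hpre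
    have step3 : ∫ p in polarCoord.target, p.1 • F₀ (polarCoord.symm p) = ∫ p, F₀ p :=
      integral_comp_polarCoord_symm F₀
    have step4 : ∫ p in polarCoord.target, p.1 • F₀ (polarCoord.symm p)
        = ∫ p in Set.Ioo r s ×ˢ Set.Ioo (-π) π, p.1 * Ψ (Pt p.1 p.2) := by
      have h1 : Set.EqOn (fun p : ℝ × ℝ => p.1 • F₀ (polarCoord.symm p))
          ((Set.Ioo r s ×ˢ (Set.univ : Set ℝ)).indicator
            (fun p : ℝ × ℝ => p.1 * Ψ (Pt p.1 p.2))) polarCoord.target := by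
        intro p hp
        rw [polarCoord_target] at hp
        have hp1 : 0 < p.1 := hp.1
        have hPtmem : eT (polarCoord.symm p) = Pt p.1 p.2 := by
          rw [polarCoord_symm_apply]; exact hTP _ _
        have hnorm : ‖Pt p.1 p.2‖ = p.1 := by rw [norm_Pt, abs_of_pos hp1]
        by_cases h : p ∈ Set.Ioo r s ×ˢ (Set.univ : Set ℝ)
        · have hmemA : polarCoord.symm p ∈ eT ⁻¹' A := by
            simp only [Set.mem_preimage, hPtmem, hAdef, Set.mem_setOf_eq, hnorm]
            exact ⟨h.1.1, h.1.2⟩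
          simp only [hF₀def, Set.indicator_of_mem hmemA, Set.indicator_of_mem h, hPtmem,
            smul_eq_mul]
        · have hnmemA : polarCoord.symm p ∉ eT ⁻¹' A := by
            simp only [Set.mem_preimage, hPtmem, hAdef, Set.mem_setOf_eq, hnorm]
            intro hc
            exact h ⟨⟨hc.1, hc.2⟩, Set.mem_univ _⟩
          simp only [hF₀def, Set.indicator_of_notMem hnmemA, Set.indicator_of_notMem h,
            smul_zero]
      have hset : polarCoord.target ∩ (Set.Ioo r s ×ˢ (Set.univ : Set ℝ))
          = Set.Ioo r s ×ˢ Set.Ioo (-π) π := by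
        rw [polarCoord_target]
        ext ⟨a, b⟩
        simp only [Set.mem_inter_iff, Set.mem_prod, Set.mem_Ioi, Set.mem_Ioo, Set.mem_univ,
          and_true]
        constructor
        · rintro ⟨⟨h1, h2⟩, h3⟩; exact ⟨h3, h2⟩
        · rintro ⟨h3, h2⟩; exact ⟨⟨lt_trans hr h3.1, h2⟩, h3⟩
      rw [setIntegral_congr_fun polarCoord.open_target.measurableSet h1,
        setIntegral_indicator ((isOpen_Ioo.prod isOpen_univ).measurableSet), hset]
    have hΨU : ContinuousOn Ψ U := hfc.norm.pow 2
    have hcontΨP : ContinuousOn (fun p : ℝ × ℝ => p.1 * Ψ (Pt p.1 p.2))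
        (Set.Icc r s ×ˢ Set.Icc (-π) π) := by
      apply ContinuousOn.mul continuous_fst.continuousOn
      exact hΨU.comp continuous_Pt.continuousOn
        (fun p hp => hmemU p.1 ⟨le_trans hr₁r.le hp.1.1, le_trans hp.1.2 hss₁.le⟩ p.2)
    have hint : IntegrableOn (fun p : ℝ × ℝ => p.1 * Ψ (Pt p.1 p.2))
        (Set.Ioo r s ×ˢ Set.Ioo (-π) π) volume :=
      (hcontΨP.integrableOn_compact (isCompact_Icc.prod isCompact_Icc)).mono_set
        (Set.prod_mono Set.Ioo_subset_Icc_self Set.Ioo_subset_Icc_self)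
    have step5 : ∫ p in Set.Ioo r s ×ˢ Set.Ioo (-π) π, p.1 * Ψ (Pt p.1 p.2)
        = ∫ ρ in Set.Ioo r s, ∫ θ in Set.Ioo (-π) π, ρ * Ψ (Pt ρ θ) := by
      rw [Measure.volume_eq_prod] at hint ⊢
      exact setIntegral_prod _ hint
    have hπ2 : -π ≤ π := by linarith [Real.pi_pos]
    have step6 : Set.EqOn (fun ρ => ∫ θ in Set.Ioo (-π) π, ρ * Ψ (Pt ρ θ))
        (fun ρ => ρ * Hf ρ) (Set.Ioo r s) := by
      intro ρ _
      have hper : Function.Periodic (fun θ => Ψ (Pt ρ θ)) (2*π) := fun θ => by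
        simp only [Pt_periodic ρ θ]
      have h1 : ∫ θ in Set.Ioo (-π) π, ρ * Ψ (Pt ρ θ) = ∫ θ in (-π)..π, ρ * Ψ (Pt ρ θ) := by
        rw [intervalIntegral.integral_of_le hπ2, integral_Ioc_eq_integral_Ioo]
      simp only [h1, intervalIntegral.integral_const_mul]
      congr 1
      have h2 := hper.intervalIntegral_add_eq (-π) 0
      have h3 : -π + 2*π = π := by ring
      rw [h3, zero_add] at h2
      rw [h2]
    have step7 : ∫ ρ in Set.Ioo r s, ∫ θ in Set.Ioo (-π) π, ρ * Ψ (Pt ρ θ)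
        = ∫ ρ in Set.Ioo r s, ρ * Hf ρ := setIntegral_congr_fun measurableSet_Ioo step6
    have step8 : ∫ ρ in r..s, ρ * Hf ρ = ∫ ρ in Set.Ioo r s, ρ * Hf ρ := by
      rw [intervalIntegral.integral_of_le hrs.le, integral_Ioc_eq_integral_Ioo]
    rw [step8, ← step7, ← step5, ← step4, step3, step2, ← step1]
  -- assemble
  have hsubIcc : Set.Icc r s ⊆ Set.Icc r₁ s₁ :=
    Set.Icc_subset_Icc hr₁r.le hss₁.le
  have e1 : ∫ ρ in r..s, |deriv fstar ρ|^2 * ρ = ∫ ρ in r..s, (G ρ)^2 * ρ := by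
    apply intervalIntegral.integral_congr_ae
    have hs0 : (volume : Measure ℝ) {s} = 0 := measure_singleton s
    filter_upwards [compl_mem_ae_iff.mpr hs0] with x hx hxI
    rw [Set.uIoc_of_le hrs.le] at hxI
    have hxo : x ∈ Set.Ioo r s := ⟨hxI.1, lt_of_le_of_ne hxI.2 (by simpa using hx)⟩
    rw [(hkey x hxo).deriv, sq_abs]
  have int1 : IntervalIntegrable (fun ρ => (G ρ)^2 * ρ) volume r s := by
    apply ContinuousOn.intervalIntegrable
    rw [Set.uIcc_of_le hrs.le]
    exact (hGc.pow 2).mul continuousOn_id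
  have int2 : IntervalIntegrable (fun ρ => (1/(2*π)) * (ρ * Hf ρ)) volume r s := by
    apply ContinuousOn.intervalIntegrable
    rw [Set.uIcc_of_le hrs.le]
    exact continuousOn_const.mul (continuousOn_id.mul hHc)
  have e2 : ∫ ρ in r..s, (G ρ)^2 * ρ ≤ ∫ ρ in r..s, (1/(2*π)) * (ρ * Hf ρ) :=
    intervalIntegral.integral_mono_on hrs.le int1 int2 hpt
  have e3 : 2*π * ∫ ρ in r..s, (1/(2*π)) * (ρ * Hf ρ) = ∫ ρ in r..s, ρ * Hf ρ := by
    rw [intervalIntegral.integral_const_mul]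
    field_simp
  have hgr : ∫ x in {x : EuclideanSpace ℝ (Fin 2) | r < ‖x‖ ∧ ‖x‖ < s}, ‖gradient f x‖^2
      = ∫ x in {x : EuclideanSpace ℝ (Fin 2) | r < ‖x‖ ∧ ‖x‖ < s}, ‖fderiv ℝ f x‖^2 := by
    simp_rw [hgradnorm]
  calc 2 * π * ∫ ρ in r..s, |deriv fstar ρ|^2 * ρ
      = 2 * π * ∫ ρ in r..s, (G ρ)^2 * ρ := by rw [e1]
    _ ≤ 2 * π * ∫ ρ in r..s, (1/(2*π)) * (ρ * Hf ρ) := by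
        apply mul_le_mul_of_nonneg_left e2 (by positivity)
    _ = ∫ ρ in r..s, ρ * Hf ρ := e3
    _ = ∫ x in {x : EuclideanSpace ℝ (Fin 2) | r < ‖x‖ ∧ ‖x‖ < s}, ‖fderiv ℝ f x‖^2 := hpolar
    _ = ∫ x in {x : EuclideanSpace ℝ (Fin 2) | r < ‖x‖ ∧ ‖x‖ < s}, ‖gradient f x‖^2 := hgr.symm
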